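/- Let F be a real 2n×2n symplectic matrix and M a complex symmetric 2n×2n matrix with positive definite imaginary part; set 𝓜 = JM. Then the matrix (I + 𝓜) + F(I − 𝓜) is invertible. -/

import Mathlib

open Matrix Complex

private lemma re_dot_map {ι : Type*} [Fintype ι] (P : Matrix ι ι ℝ) (x : ι → ℂ) :
    (star x ⬝ᵥ (P.map ofReal) *ᵥ x).re =
      (fun i => (x i).re) ⬝ᵥ P *ᵥ (fun i => (x i).re) +
      (fun i => (x i).im) ⬝ᵥ P *ᵥ (fun i => (x i).im) := by
  simp only [dotProduct, mulVec, Matrix.map_apply, Pi.star_apply, Finset.mul_sum]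
  rw [Complex.re_sum, ← Finset.sum_add_distrib]
  refine Finset.sum_congr rfl fun i _ => ?_
  rw [Complex.re_sum, ← Finset.sum_add_distrib]
  refine Finset.sum_congr rfl fun j _ => ?_
  simp [Complex.mul_re, Complex.mul_im]

private lemma posdef_complex_kernel {ι : Type*} [Fintype ι] {P : Matrix ι ι ℝ}
    (hP : P.PosDef) {x : ι → ℂ} (hx : star x ⬝ᵥ (P.map ofReal) *ᵥ x = 0) : x = 0 := by
  have hre := congrArg Complex.re hx
  rw [re_dot_map] at hre
  set a : ι → ℝ := fun i => (x i).re with ha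
  set b : ι → ℝ := fun i => (x i).im with hb
  have h1 : (0:ℝ) ≤ a ⬝ᵥ P *ᵥ a := by simpa using hP.posSemidef.dotProduct_mulVec_nonneg a
  have h2 : (0:ℝ) ≤ b ⬝ᵥ P *ᵥ b := by simpa using hP.posSemidef.dotProduct_mulVec_nonneg b
  have ha0 : a = 0 := by
    by_contra h
    have := hP.dotProduct_mulVec_pos h
    simp only [star_trivial] at this
    simp only [Complex.zero_re] at hre
    linarith
  have hb0 : b = 0 := by
    by_contra h
    have := hP.dotProduct_mulVec_pos h
    simp only [star_trivial] at this
    simp only [Complex.zero_re] at hre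
    linarith
  funext i
  have h1 : (x i).re = 0 := congrFun ha0 i
  have h2 : (x i).im = 0 := congrFun hb0 i
  exact Complex.ext h1 h2

theorem stmt_6 (n : ℕ) (F : Matrix (Fin n ⊕ Fin n) (Fin n ⊕ Fin n) ℝ)
    (hF : Fᵀ * (Matrix.fromBlocks 0 1 (-1) 0) * F = (Matrix.fromBlocks 0 1 (-1) 0 :
      Matrix (Fin n ⊕ Fin n) (Fin n ⊕ Fin n) ℝ))
    (M : Matrix (Fin n ⊕ Fin n) (Fin n ⊕ Fin n) ℂ) (hMsym : Mᵀ = M)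
    (hMpos : (M.map Complex.im).PosDef) :
    IsUnit ((1 + (Matrix.fromBlocks 0 1 (-1) 0 :
        Matrix (Fin n ⊕ Fin n) (Fin n ⊕ Fin n) ℂ) * M) +
      F.map Complex.ofReal * (1 - (Matrix.fromBlocks 0 1 (-1) 0 :
        Matrix (Fin n ⊕ Fin n) (Fin n ⊕ Fin n) ℂ) * M)) := by
  set J : Matrix (Fin n ⊕ Fin n) (Fin n ⊕ Fin n) ℂ := fromBlocks 0 1 (-1) 0 with hJdef
  set Fc : Matrix (Fin n ⊕ Fin n) (Fin n ⊕ Fin n) ℂ := F.map Complex.ofReal with hFcdef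
  set A : Matrix (Fin n ⊕ Fin n) (Fin n ⊕ Fin n) ℂ := (1 + J * M) + Fc * (1 - J * M) with hAdef
  -- basic facts about J
  have hJJ : J * J = -1 := by
    rw [hJdef, fromBlocks_multiply, ← fromBlocks_one, fromBlocks_neg]
    simp
  have hJH : Jᴴ = -J := by
    rw [hJdef, fromBlocks_conjTranspose, fromBlocks_neg]
    simp
  -- symplectic relation over ℂ
  have hFcJ : Fcᵀ * J * Fc = J := by
    have hneg : ((-1 : Matrix (Fin n) (Fin n) ℝ).map (ofRealHom : ℝ →+* ℂ)) = -1 := by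
      ext i j; by_cases h : i = j <;> simp [Matrix.map_apply, Matrix.one_apply, h]
    have := congrArg (ofRealHom.mapMatrix) hF
    simp only [RingHom.mapMatrix_apply, Matrix.map_mul, fromBlocks_map, Matrix.transpose_map,
      Matrix.map_one _ (map_zero _) (map_one _), Matrix.map_zero _ (map_zero _), hneg] at this
    exact this
  have hFcH : Fcᴴ = Fcᵀ := by
    ext i j
    simp [hFcdef, conjTranspose_apply, Matrix.map_apply]
  -- reduce to kernel
  rw [Matrix.isUnit_iff_isUnit_det, isUnit_iff_ne_zero]
  intro hdet
  obtain ⟨v, hv, hAv⟩ := (Matrix.exists_mulVec_eq_zero_iff.mpr hdet)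
  set m : (Fin n ⊕ Fin n) → ℂ := (J * M) *ᵥ v with hmdef
  set p : (Fin n ⊕ Fin n) → ℂ := v + m with hpdef
  set q : (Fin n ⊕ Fin n) → ℂ := v - m with hqdef
  have hpq : p = -(Fc *ᵥ q) := by
    have h : A *ᵥ v = p + Fc *ᵥ q := by
      simp only [hAdef, hpdef, hqdef, hmdef, Matrix.add_mulVec, Matrix.sub_mulVec,
        Matrix.one_mulVec, ← Matrix.mulVec_mulVec, Matrix.mulVec_sub]
    rw [hAv] at h
    linear_combination (norm := module) -h
  -- the symplectic form is preserved
  have hpres : star p ⬝ᵥ (J *ᵥ p) = star q ⬝ᵥ (J *ᵥ q) := by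
    rw [hpq]
    rw [star_neg, Matrix.mulVec_neg, dotProduct_neg, neg_dotProduct, neg_neg]
    rw [star_mulVec, hFcH]
    rw [Matrix.mulVec_mulVec]
    rw [Matrix.dotProduct_mulVec, Matrix.vecMul_vecMul, ← Matrix.mul_assoc, hFcJ,
      ← Matrix.dotProduct_mulVec]
  -- compute the two cross terms
  have h1 : star v ⬝ᵥ (J *ᵥ m) = -(star v ⬝ᵥ (M *ᵥ v)) := by
    rw [hmdef, Matrix.mulVec_mulVec, ← Matrix.mul_assoc, hJJ]
    simp [Matrix.neg_mulVec]
  have h2 : star m ⬝ᵥ (J *ᵥ v) = star v ⬝ᵥ ((M.map (starRingEnd ℂ)) *ᵥ v) := by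
    rw [hmdef, star_mulVec, Matrix.dotProduct_mulVec, Matrix.vecMul_vecMul]
    have hMH : (J * M)ᴴ * J = M.map (starRingEnd ℂ) := by
      rw [Matrix.conjTranspose_mul, hJH, Matrix.mul_assoc, Matrix.neg_mul, Matrix.mul_neg, hJJ]
      have hM : Mᴴ = M.map (starRingEnd ℂ) := by
        rw [Matrix.conjTranspose, hMsym]; rfl
      simp [hM]
    rw [hMH, ← Matrix.dotProduct_mulVec]
  -- expansion identity
  have hexp : star p ⬝ᵥ (J *ᵥ p) - star q ⬝ᵥ (J *ᵥ q) =
      2 * (star v ⬝ᵥ (J *ᵥ m) + star m ⬝ᵥ (J *ᵥ v)) := by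
    rw [hpdef, hqdef]
    simp only [star_add, star_sub, Matrix.mulVec_add, Matrix.mulVec_sub,
      dotProduct_add, dotProduct_sub, add_dotProduct, sub_dotProduct]
    ring
  rw [hpres, sub_self, h1, h2] at hexp
  have hkey : star v ⬝ᵥ ((M.map (starRingEnd ℂ)) *ᵥ v) - star v ⬝ᵥ (M *ᵥ v) = 0 := by
    linear_combination -hexp / 2
  -- relate M.map conj - M to the imaginary part
  have hdiff : M.map (starRingEnd ℂ) =
      M - ((2 * Complex.I) • ((M.map Complex.im).map ofReal)) := by
    ext i j
    simp only [Matrix.map_apply, Matrix.sub_apply, Matrix.smul_apply, smul_eq_mul]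
    apply Complex.ext <;> simp [Complex.mul_re, Complex.mul_im]; ring
  rw [hdiff, Matrix.sub_mulVec, dotProduct_sub] at hkey
  have hzero : star v ⬝ᵥ (((M.map Complex.im).map ofReal) *ᵥ v) = 0 := by
    have h2I : (2 * Complex.I) ≠ 0 := by simp [Complex.I_ne_zero]
    have : (2 * Complex.I) * (star v ⬝ᵥ (((M.map Complex.im).map ofReal) *ᵥ v)) = 0 := by
      rw [Matrix.smul_mulVec, dotProduct_smul, smul_eq_mul] at hkey
      linear_combination -hkey
    exact (mul_eq_zero.mp this).resolve_left h2I
  exact hv (posdef_complex_kernel hMpos hzero)
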